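/- Let f : ℝⁿ → ℝ and c : ℝⁿ → ℝᵐ be continuously differentiable. Suppose (w_k) ⊂ ℝⁿ, (δ_k) ⊂ ℝⁿ and (μ_k) ⊂ ℝᵐ are sequences with w_k → w̄, δ_k → 0, μ_k → μ̄, such that for every k: μ_k ≥ 0, ∇f(w_k + δ_k) + Dc(w_k)ᵀμ_k = 0, c(w_k) + Dc(w_k)·δ_k ≤ 0, and μ_kᵀ(c(w_k) + Dc(w_k)·δ_k) = 0, where Dc denotes the Jacobian of c. Then w̄ is a KKT point of the problem min{f(x) : c(x) ≤ 0} with multiplier μ̄: ∇f(w̄) + Dc(w̄)ᵀμ̄ = 0, c(w̄) ≤ 0, μ̄ ≥ 0, and μ̄ᵀc(w̄) = 0. -/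

import Mathlib

open Filter Topology

private lemma app_tendsto {n : ℕ} {L : ℕ → ((Fin n → ℝ) →L[ℝ] ℝ)}
    {Lb : (Fin n → ℝ) →L[ℝ] ℝ} {v : ℕ → (Fin n → ℝ)} {vb : Fin n → ℝ}
    (hL : Tendsto L atTop (nhds Lb)) (hv : Tendsto v atTop (nhds vb)) :
    Tendsto (fun k => L k (v k)) atTop (nhds (Lb vb)) := by
  have hcont : Continuous (fun p : ((Fin n → ℝ) →L[ℝ] ℝ) × (Fin n → ℝ) => p.1 p.2) :=
    isBoundedBilinearMap_apply.continuous
  exact (hcont.tendsto (Lb, vb)).comp (hL.prodMk_nhds hv)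

/-- Passing the KKT systems of the convex subproblems to the limit: if the iterates
`w_k` converge to `w̄`, the steps `δ_k` tend to `0`, the multipliers `μ_k` converge
to `μ̄`, and at every `k` the KKT conditions of the linearized subproblem hold, then
`w̄` is a KKT point of `min{f(x) : c(x) ≤ 0}` with multiplier `μ̄`. -/
theorem stmt_14 (n m : ℕ)
    (f : (Fin n → ℝ) → ℝ) (c : Fin m → (Fin n → ℝ) → ℝ)
    (hf : ContDiff ℝ 1 f) (hc : ∀ j, ContDiff ℝ 1 (c j))
    (w δ : ℕ → (Fin n → ℝ)) (μ : ℕ → (Fin m → ℝ))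
    (wbar : Fin n → ℝ) (μbar : Fin m → ℝ)
    (hwconv : Filter.Tendsto w Filter.atTop (nhds wbar))
    (hδconv : Filter.Tendsto δ Filter.atTop (nhds 0))
    (hμconv : Filter.Tendsto μ Filter.atTop (nhds μbar))
    (hμpos : ∀ k, ∀ j, 0 ≤ μ k j)
    (hstat : ∀ k, ∀ d : Fin n → ℝ,
      fderiv ℝ f (w k + δ k) d + ∑ j, μ k j * fderiv ℝ (c j) (w k) d = 0)
    (hfeas : ∀ k, ∀ j, c j (w k) + fderiv ℝ (c j) (w k) (δ k) ≤ 0)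
    (hcomp : ∀ k, ∑ j, μ k j * (c j (w k) + fderiv ℝ (c j) (w k) (δ k)) = 0) :
    (∀ d : Fin n → ℝ,
      fderiv ℝ f wbar d + ∑ j, μbar j * fderiv ℝ (c j) wbar d = 0)
    ∧ (∀ j, c j wbar ≤ 0)
    ∧ (∀ j, 0 ≤ μbar j)
    ∧ ∑ j, μbar j * c j wbar = 0 := by
  have hwδ : Tendsto (fun k => w k + δ k) atTop (nhds wbar) := by
    have := hwconv.add hδconv
    simpa using this
  -- fderiv f at w+δ tends to fderiv f wbar
  have hDf : Tendsto (fun k => fderiv ℝ f (w k + δ k)) atTop (nhds (fderiv ℝ f wbar)) :=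
    ((hf.continuous_fderiv one_ne_zero).tendsto wbar).comp hwδ
  have hDc : ∀ j, Tendsto (fun k => fderiv ℝ (c j) (w k)) atTop
      (nhds (fderiv ℝ (c j) wbar)) := fun j =>
    (((hc j).continuous_fderiv one_ne_zero).tendsto wbar).comp hwconv
  have hμj : ∀ j, Tendsto (fun k => μ k j) atTop (nhds (μbar j)) := fun j =>
    (continuous_apply j).continuousAt.tendsto.comp hμconv
  have hcj : ∀ j, Tendsto (fun k => c j (w k)) atTop (nhds (c j wbar)) := fun j =>
    (((hc j).continuous).tendsto wbar).comp hwconv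
  -- Dc(w_k) δ_k → 0
  have hDcδ : ∀ j, Tendsto (fun k => fderiv ℝ (c j) (w k) (δ k)) atTop (nhds 0) := by
    intro j
    have := app_tendsto (hDc j) hδconv
    simpa using this
  have hlin : ∀ j, Tendsto (fun k => c j (w k) + fderiv ℝ (c j) (w k) (δ k)) atTop
      (nhds (c j wbar)) := by
    intro j
    have := (hcj j).add (hDcδ j)
    simpa using this
  refine ⟨?_, ?_, ?_, ?_⟩
  · intro d
    have h1 : Tendsto (fun k => fderiv ℝ f (w k + δ k) d +
        ∑ j, μ k j * fderiv ℝ (c j) (w k) d) atTop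
        (nhds (fderiv ℝ f wbar d + ∑ j, μbar j * fderiv ℝ (c j) wbar d)) := by
      refine (app_tendsto hDf tendsto_const_nhds).add ?_
      exact tendsto_finset_sum _ fun j _ =>
        (hμj j).mul (app_tendsto (hDc j) tendsto_const_nhds)
    have h2 : Tendsto (fun k => fderiv ℝ f (w k + δ k) d +
        ∑ j, μ k j * fderiv ℝ (c j) (w k) d) atTop (nhds 0) := by
      simpa [hstat _ d] using (tendsto_const_nhds : Tendsto (fun _ : ℕ => (0:ℝ)) atTop _)
    exact tendsto_nhds_unique h1 h2
  · intro j
    exact le_of_tendsto (hlin j) (Filter.Eventually.of_forall fun k => hfeas k j)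
  · intro j
    exact ge_of_tendsto (hμj j) (Filter.Eventually.of_forall fun k => hμpos k j)
  · have h1 : Tendsto (fun k => ∑ j, μ k j * (c j (w k) + fderiv ℝ (c j) (w k) (δ k)))
        atTop (nhds (∑ j, μbar j * c j wbar)) :=
      tendsto_finset_sum _ fun j _ => (hμj j).mul (hlin j)
    have h2 : Tendsto (fun k => ∑ j, μ k j * (c j (w k) + fderiv ℝ (c j) (w k) (δ k)))
        atTop (nhds 0) := by
      simpa [hcomp] using (tendsto_const_nhds : Tendsto (fun _ : ℕ => (0:ℝ)) atTop _)
    exact tendsto_nhds_unique h1 h2
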